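/- arXiv:1511.01961 — 4 statements merged into one kernel-verified Lean document; each statement's English description precedes it below -/
import Mathlib

section
/- Let 1 ≤ k ≤ m with k = m or k odd, and let a, b ∈ B^{n-k,k} be cup diagrams with S_a ∩ S_b ≠ ∅. Then S_a ∩ S_b (with the subspace topology from (S²)^m) is homeomorphic to (S²)^circ, where circ is the number of closed connected components of the circle diagram graph of a and b. -/
noncomputable section
namespace Spr

/-! ### Linear algebra setup -/

abbrev Vsp (N : ℕ) := EuclideanSpace ℂ (Fin (2*N))
abbrev C2 := EuclideanSpace ℂ (Fin 2)

/-- The basis vector `e_i` (1-based index). -/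
def eVec (N i : ℕ) : Vsp N :=
  if h : 1 ≤ i ∧ i ≤ N then EuclideanSpace.single (⟨i-1, by omega⟩ : Fin (2*N)) 1 else 0

/-- The basis vector `f_i` (1-based index). -/
def fVec (N i : ℕ) : Vsp N :=
  if h : 1 ≤ i ∧ i ≤ N then EuclideanSpace.single (⟨N+i-1, by omega⟩ : Fin (2*N)) 1 else 0

/-- The standard basis vector `e` of `ℂ²`. -/
def eStd : C2 := EuclideanSpace.single 0 1
/-- The standard basis vector `f` of `ℂ²`. -/
def fStd : C2 := EuclideanSpace.single 1 1

/-- The nilpotent endomorphism `z` with two equal Jordan blocks: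
`z e_1 = 0 = z f_1`, `z e_{i+1} = e_i`, `z f_{i+1} = f_i`. -/
def zMap (N : ℕ) : Vsp N →ₗ[ℂ] Vsp N where
  toFun v := WithLp.toLp 2 (fun j : Fin (2*N) => if h : j.val + 1 < 2*N ∧ j.val + 1 ≠ N then v ⟨j.val+1, h.1⟩ else 0)
  map_add' v w := by
    ext j
    by_cases h : j.val + 1 < 2*N ∧ j.val + 1 ≠ N <;> simp [h, PiLp.add_apply]
  map_smul' c v := by
    ext j
    by_cases h : j.val + 1 < 2*N ∧ j.val + 1 ≠ N <;> simp [h, PiLp.smul_apply]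

def cIdx (N : ℕ) (j : Fin 2) (i : Fin N) : Fin (2*N) :=
  ⟨if j.val = 0 then i.val else N + i.val, by have := i.isLt; split <;> omega⟩

/-- The linear map `C : ℂ^{2N} → ℂ²`, `e_i ↦ e`, `f_i ↦ f`. -/
def Cmap (N : ℕ) : Vsp N →ₗ[ℂ] C2 where
  toFun v := WithLp.toLp 2 (fun j => ∑ i : Fin N, v (cIdx N j i))
  map_add' v w := by
    ext j
    simp [PiLp.add_apply, Finset.sum_add_distrib]
  map_smul' c v := by
    ext j
    simp [PiLp.smul_apply, Finset.mul_sum]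

/-- The subspace `E_{a,b} = span(e_1,…,e_a,f_1,…,f_b)`. -/
def Esub (N a b : ℕ) : Submodule ℂ (Vsp N) :=
  Submodule.span ℂ ((eVec N '' Set.Icc 1 a) ∪ (fVec N '' Set.Icc 1 b))

/-- Gram coefficients of the symmetric bilinear form `β_D^{2m-k,k}`. -/
def cD (N m k : ℕ) (p q : Fin (2*N)) : ℂ :=
  if k = m then
    (if p.val < N ∧ N ≤ q.val then
      (if (p.val + 1) + (q.val - N + 1) = k + 1 then (-1:ℂ)^(q.val - N) else 0)
    else if N ≤ p.val ∧ q.val < N then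
      (if (p.val - N + 1) + (q.val + 1) = k + 1 then (-1:ℂ)^(p.val - N) else 0)
    else 0)
  else
    (if p.val < N ∧ q.val < N then
      (if (p.val + 1) + (q.val + 1) = 2*m - k + 1 then (-1:ℂ)^(p.val) else 0)
    else if N ≤ p.val ∧ N ≤ q.val then
      (if (p.val - N + 1) + (q.val - N + 1) = k + 1 then (-1:ℂ)^(p.val - N + 1) else 0)
    else 0)

/-- Gram coefficients of the symplectic bilinear form `β_C^{2m-k-1,k-1}`. -/
def cC (N m k : ℕ) (p q : Fin (2*N)) : ℂ :=
  if k = m then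
    (if N ≤ p.val ∧ q.val < N then
      (if (p.val - N + 1) + (q.val + 1) = k then (-1:ℂ)^(p.val - N) else 0)
    else if p.val < N ∧ N ≤ q.val then
      (if (p.val + 1) + (q.val - N + 1) = k then -(-1:ℂ)^(q.val - N) else 0)
    else 0)
  else
    (if p.val < N ∧ q.val < N then
      (if (p.val + 1) + (q.val + 1) = 2*m - k ∧ p.val < q.val then (-1:ℂ)^(p.val + 1)
       else if (p.val + 1) + (q.val + 1) = 2*m - k ∧ q.val < p.val then (-1:ℂ)^(p.val)
       else 0)
    else if N ≤ p.val ∧ N ≤ q.val then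
      (if (p.val - N + 1) + (q.val - N + 1) = k ∧ p.val < q.val then (-1:ℂ)^(p.val - N)
       else if (p.val - N + 1) + (q.val - N + 1) = k ∧ q.val < p.val then (-1:ℂ)^(p.val - N + 1)
       else 0)
    else 0)

/-- The bilinear pairing associated to a matrix `c` of coefficients. -/
def bFormFun (N : ℕ) (c : Fin (2*N) → Fin (2*N) → ℂ) (v w : Vsp N) : ℂ :=
  ∑ p : Fin (2*N), ∑ q : Fin (2*N), v p * (c p q * w q)

/-- The symmetric bilinear form `β_D^{2m-k,k}` (extended by zero to all of `ℂ^{2N}`). -/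
def betaD (N m k : ℕ) : Vsp N → Vsp N → ℂ := bFormFun N (cD N m k)

/-- The symplectic bilinear form `β_C^{2m-k-1,k-1}` (extended by zero to all of `ℂ^{2N}`). -/
def betaC (N m k : ℕ) : Vsp N → Vsp N → ℂ := bFormFun N (cC N m k)

/-- A subspace is isotropic with respect to a bilinear form. -/
def IsIsotropic {N : ℕ} (B : Vsp N → Vsp N → ℂ) (W : Submodule ℂ (Vsp N)) : Prop :=
  ∀ v ∈ W, ∀ w ∈ W, B v w = 0

lemma bFormFun_add_left {N : ℕ} (c : Fin (2*N) → Fin (2*N) → ℂ) (v v' w : Vsp N) :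
    bFormFun N c (v + v') w = bFormFun N c v w + bFormFun N c v' w := by
  simp [bFormFun, PiLp.add_apply, add_mul, Finset.sum_add_distrib]

lemma bFormFun_smul_left {N : ℕ} (c : Fin (2*N) → Fin (2*N) → ℂ) (s : ℂ) (v w : Vsp N) :
    bFormFun N c (s • v) w = s * bFormFun N c v w := by
  simp [bFormFun, PiLp.smul_apply, smul_eq_mul, mul_assoc, Finset.mul_sum]

lemma bFormFun_zero_left {N : ℕ} (c : Fin (2*N) → Fin (2*N) → ℂ) (w : Vsp N) :
    bFormFun N c 0 w = 0 := by
  simp [bFormFun]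

/-- `{v ∈ E | ∀ w ∈ F, B(v,w) = 0}` for the bilinear form with coefficients `c`. -/
def perpB (N : ℕ) (c : Fin (2*N) → Fin (2*N) → ℂ) (E F : Submodule ℂ (Vsp N)) :
    Submodule ℂ (Vsp N) where
  carrier := {v | v ∈ E ∧ ∀ w ∈ F, bFormFun N c v w = 0}
  add_mem' := by
    rintro x y ⟨hxE, hx⟩ ⟨hyE, hy⟩
    exact ⟨E.add_mem hxE hyE, fun w hw => by
      rw [bFormFun_add_left, hx w hw, hy w hw, add_zero]⟩
  zero_mem' := ⟨E.zero_mem, fun w hw => bFormFun_zero_left c w⟩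
  smul_mem' := by
    rintro s x ⟨hxE, hx⟩
    exact ⟨E.smul_mem s hxE, fun w hw => by
      rw [bFormFun_smul_left, hx w hw, mul_zero]⟩

/-- `F^{⊥_D}`, the orthogonal of `F` inside `E_{2m-k,k}` with respect to `β_D`. -/
def perpD (N m k : ℕ) (F : Submodule ℂ (Vsp N)) : Submodule ℂ (Vsp N) :=
  perpB N (cD N m k) (Esub N (2*m-k) k) F

/-- `F^{⊥_C}`, the orthogonal of `F` inside `E_{2m-k-1,k-1}` with respect to `β_C`. -/
def perpC (N m k : ℕ) (F : Submodule ℂ (Vsp N)) : Submodule ℂ (Vsp N) :=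
  perpB N (cC N m k) (Esub N (2*m-k-1) (k-1)) F

/-- Membership in the Cautis–Kamnitzer variety `Y`: a flag `F_0 ⊆ F_1 ⊆ … ⊆ F_{len-1}` with
`F_0 = 0`, `dim F_i = i`, and `z F_i ⊆ F_{i-1}`. -/
def InY (N len : ℕ) (F : Fin len → Submodule ℂ (Vsp N)) : Prop :=
  (∀ i : Fin len, i.val = 0 → F i = ⊥) ∧
  ∀ i j : Fin len, j.val = i.val + 1 →
    Module.finrank ℂ ↥(F j) = j.val ∧ F i ≤ F j ∧
      Submodule.map (zMap N) (F j) ≤ F i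

/-- Membership in the embedded type `D` Springer fiber `Fl^{2m-k,k}_D ⊆ Y_m`. -/
def InFlD (N m k : ℕ) (F : Fin (m+1) → Submodule ℂ (Vsp N)) : Prop :=
  InY N (m+1) F ∧ F (Fin.last m) ≤ Esub N (2*m-k) k ∧
    IsIsotropic (betaD N m k) (F (Fin.last m))

/-- Membership in the embedded type `C` Springer fiber `Fl^{2m-k-1,k-1}_C ⊆ Y_{m-1}`;
here `G : Fin m → _` is the flag `(G_0,…,G_{m-1})`. -/
def InFlC (N m k : ℕ) (G : Fin m → Submodule ℂ (Vsp N)) : Prop :=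
  InY N m G ∧ ∀ i : Fin m, i.val = m - 1 →
    G i ≤ Esub N (2*m-k-1) (k-1) ∧ IsIsotropic (betaC N m k) (G i)

/-! ### Cup diagrams -/

/-- A (dotted) cup diagram on the vertices `{1,…,m}`. -/
structure CupDiagram (m : ℕ) where
  cups : Finset (ℕ × ℕ)
  dottedCups : Finset (ℕ × ℕ)
  dottedRays : Finset ℕ
  cups_valid : ∀ p ∈ cups, 1 ≤ p.1 ∧ p.1 < p.2 ∧ p.2 ≤ m
  cups_disjoint : ∀ p ∈ cups, ∀ q ∈ cups, p ≠ q →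
    p.1 ≠ q.1 ∧ p.1 ≠ q.2 ∧ p.2 ≠ q.1 ∧ p.2 ≠ q.2
  noncrossing : ∀ p ∈ cups, ∀ l, p.1 < l → l < p.2 →
    ∃ q ∈ cups, (l = q.1 ∨ l = q.2) ∧ p.1 < q.1 ∧ q.2 < p.2
  dottedCups_sub : dottedCups ⊆ cups
  dottedRays_valid : ∀ r ∈ dottedRays, 1 ≤ r ∧ r ≤ m ∧ ∀ p ∈ cups, r ≠ p.1 ∧ r ≠ p.2
  dottedCups_cond : ∀ p ∈ dottedCups,
    (∀ q ∈ cups, ¬(q.1 < p.1 ∧ p.2 < q.2)) ∧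
    (∀ r, p.2 < r → r ≤ m → ∃ q ∈ cups, r = q.1 ∨ r = q.2)
  dottedRays_cond : ∀ r ∈ dottedRays, ∀ r', r < r' → r' ≤ m →
    ∃ q ∈ cups, r' = q.1 ∨ r' = q.2

/-- The vertex `v` carries a ray of the cup diagram `a`. -/
def CupDiagram.HasRay {m : ℕ} (a : CupDiagram m) (v : ℕ) : Prop :=
  1 ≤ v ∧ v ≤ m ∧ ∀ p ∈ a.cups, v ≠ p.1 ∧ v ≠ p.2

/-- The total number of dots of a cup diagram. -/
def CupDiagram.dots {m : ℕ} (a : CupDiagram m) : ℕ :=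
  a.dottedCups.card + a.dottedRays.card

/-! ### The sets `T_a ⊆ (ℙ¹)^m` -/

/-- The subset `T_a ⊆ (ℙ¹)^m` attached to a cup diagram `a ∈ B^{2m-k,k}`
(tuples are `0`-indexed: the coordinate `l i` corresponds to the vertex `i+1`). -/
def Ta (m k : ℕ) (a : CupDiagram m) : Set (Fin m → Submodule ℂ C2) :=
  {l | (∀ i : Fin m, Module.finrank ℂ ↥(l i) = 1) ∧
       (∀ i j : Fin m, (i.val+1, j.val+1) ∈ a.cups → (i.val+1, j.val+1) ∉ a.dottedCups →
          l j = (l i)ᗮ) ∧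
       (∀ i j : Fin m, (i.val+1, j.val+1) ∈ a.dottedCups → l i = l j) ∧
       (if k = m then
          ∀ i : Fin m, a.HasRay (i.val+1) →
            (i.val+1 ∉ a.dottedRays → l i = Submodule.span ℂ {fStd}) ∧
            (i.val+1 ∈ a.dottedRays → l i = Submodule.span ℂ {eStd})
        else
          ∀ i : Fin m, a.HasRay (i.val+1) →
            ((∃ r, a.HasRay r ∧ i.val+1 < r) → l i = Submodule.span ℂ {eStd}) ∧
            ((∀ r, a.HasRay r → r ≤ i.val+1) →
              l i = Submodule.span ℂ
                {(if (m-k) % 2 = 0 then (1:ℂ) else Complex.I) • eStd +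
                 (if i.val+1 ∈ a.dottedRays then (1:ℂ) else (-1:ℂ)) • fStd}))}

/-- The compatibility `C(F_{i} ∩ F_{i-1}^⊥) = l_i` for all `1 ≤ i ≤ m`. -/
def Compat (N m : ℕ) (F : Fin (m+1) → Submodule ℂ (Vsp N))
    (l : Fin m → Submodule ℂ C2) : Prop :=
  ∀ i : Fin m, Submodule.map (Cmap N) (F i.succ ⊓ (F i.castSucc)ᗮ) = l i

/-! ### Spheres and the topological Springer fiber -/

abbrev E3 := EuclideanSpace ℝ (Fin 3)
abbrev Sph : Type := ↥(Metric.sphere (0 : E3) 1)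

/-- The point `p = (0,0,1)`. -/
def pPt : E3 := EuclideanSpace.single 2 1
/-- The point `q = (1,0,0)`. -/
def qPt : E3 := EuclideanSpace.single 0 1

/-- The submanifold `S_a ⊆ (S²)^m` attached to a cup diagram `a`
(tuples are `0`-indexed: the coordinate `x i` corresponds to the vertex `i+1`). -/
def Sa (m : ℕ) (a : CupDiagram m) : Set (Fin m → Sph) :=
  {x | (∀ i j : Fin m, (i.val+1, j.val+1) ∈ a.cups →
          ((i.val+1, j.val+1) ∉ a.dottedCups → (x i : E3) = -(x j : E3)) ∧
          ((i.val+1, j.val+1) ∈ a.dottedCups → (x i : E3) = (x j : E3))) ∧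
       (∀ i : Fin m, a.HasRay (i.val+1) →
          (i.val+1 ∈ a.dottedRays → (x i : E3) = pPt) ∧
          (i.val+1 ∉ a.dottedRays →
            ((∀ r, a.HasRay r → r ≤ i.val+1) → (x i : E3) = -pPt) ∧
            ((∃ r, a.HasRay r ∧ i.val+1 < r) → (x i : E3) = qPt)))}

/-! ### Circle diagrams -/

/-- The edge relation of the circle diagram `\bar a b`. -/
def EdgeRel (m : ℕ) (a b : CupDiagram m) (i j : ℕ) : Prop :=
  (i, j) ∈ a.cups ∨ (j, i) ∈ a.cups ∨ (i, j) ∈ b.cups ∨ (j, i) ∈ b.cups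

/-- Two vertices lie in the same connected component of the circle diagram. -/
def Reach (m : ℕ) (a b : CupDiagram m) : ℕ → ℕ → Prop :=
  Relation.ReflTransGen (EdgeRel m a b)

/-- The number of dots on the connected component of the vertex `v` in the
circle diagram `\bar a b`. -/
def compDots (m : ℕ) (a b : CupDiagram m) (v : ℕ) : ℕ :=
  {p : ℕ × ℕ | p ∈ a.dottedCups ∧ Reach m a b v p.1 ∧ Reach m a b v p.2}.ncard +
  {p : ℕ × ℕ | p ∈ b.dottedCups ∧ Reach m a b v p.1 ∧ Reach m a b v p.2}.ncard +
  {r : ℕ | r ∈ a.dottedRays ∧ Reach m a b v r}.ncard +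
  {r : ℕ | r ∈ b.dottedRays ∧ Reach m a b v r}.ncard

/-- The connected component of `v` in the circle diagram is closed, i.e. none of
its vertices carries a ray of `a` or of `b`. -/
def IsClosedCompAt (m : ℕ) (a b : CupDiagram m) (v : ℕ) : Prop :=
  ∀ w, Reach m a b v w → ¬ a.HasRay w ∧ ¬ b.HasRay w

/-- The number of closed connected components of the circle diagram `\bar a b`. -/
def numClosed (m : ℕ) (a b : CupDiagram m) : ℕ :=
  {s : Set ℕ | ∃ v, 1 ≤ v ∧ v ≤ m ∧ IsClosedCompAt m a b v ∧
      s = {w | Reach m a b v w}}.ncard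

/-! ### The diffeomorphism `γ_{n-k,k}` -/

/-- Stereographic projection `S² \ {p} → ℂ`. -/
def sigmaProj (v : E3) : ℂ :=
  Complex.ofReal (v 0 / (1 - v 2)) + Complex.I * Complex.ofReal (v 1 / (1 - v 2))

open scoped Classical in
/-- The map `γ : S² → ℙ¹` (extended to the ambient space `ℝ³`). -/
def gammaAmb (v : E3) : Submodule ℂ C2 :=
  if v = pPt then Submodule.span ℂ {eStd}
  else Submodule.span ℂ {sigmaProj v • eStd + fStd}

/-- The coordinate swap `s(x,y,z) = (x,z,y)`. -/
def sSwap (v : E3) : E3 := WithLp.toLp 2 (fun j : Fin 3 => v (if j.val = 1 then (2 : Fin 3) else if j.val = 2 then 1 else 0))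
/-- The coordinate swap `t(x,y,z) = (z,y,x)`. -/
def tSwap (v : E3) : E3 := WithLp.toLp 2 (fun j : Fin 3 => v (if j.val = 0 then (2 : Fin 3) else if j.val = 2 then 0 else 1))

/-- The diffeomorphism `γ_{n-k,k} : (S²)^m → (ℙ¹)^m`. -/
def gammaNK (m k : ℕ) (x : Fin m → Sph) : Fin m → Submodule ℂ C2 := fun i =>
  if k = m then gammaAmb (x i)
  else if (m - k) % 2 = 1 then gammaAmb (tSwap (x i))
  else gammaAmb (sSwap (x i))

/-! ### Jordan types and special simultaneous Jordan systems -/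

/-- The nilpotent endomorphism induced by `z` on the subquotient `W/F` has Jordan type
`(a,b)`, encoded via the dimensions of the kernels of its powers:
`dim ker((z̄)^j) = min(j,a) + min(j,b)` for all `j`. -/
def HasJordanTypeOn (N : ℕ) (W F : Submodule ℂ (Vsp N)) (a b : ℕ) : Prop :=
  ∀ j : ℕ, Module.finrank ℂ ↥(W ⊓ Submodule.comap (zMap N ^ j) F)
    = min j a + min j b + Module.finrank ℂ ↥F

/-- A special simultaneous Jordan system at level `i` for the subspace `Fi = F_i`
(Definition of Ehrig–Stroppel–Wilbert, Definition 4.4 of the paper). -/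
def SpecialSJS (N m k : ℕ) (Fi : Submodule ℂ (Vsp N)) (i : ℕ) (ev fv : ℕ → Vsp N) : Prop :=
  (∀ j, 1 ≤ j → j + 1 ≤ m - i → zMap N (ev (j+1)) = ev j ∧ zMap N (fv (j+1)) = fv j) ∧
  (zMap N (ev 1) ∈ Fi ∧ zMap N (fv 1) ∈ Fi) ∧
  (∀ j, 1 ≤ j → j ≤ m - i → ev j ∈ perpD N m k Fi ∧ fv j ∈ perpD N m k Fi) ∧
  (∀ j, 1 ≤ j → j ≤ m - i - 1 → ev j ∈ perpC N m k Fi ∧ fv j ∈ perpC N m k Fi) ∧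
  LinearIndependent ℂ (fun s : Fin (m-i) ⊕ Fin (m-i) =>
    (Submodule.Quotient.mk (Sum.elim (fun t => ev (t.val+1)) (fun t => fv (t.val+1)) s) :
      Vsp N ⧸ Fi)) ∧
  (perpD N m k Fi
     = Fi ⊔ Submodule.span ℂ ((ev '' Set.Icc 1 (m-i)) ∪ (fv '' Set.Icc 1 (m-i)))) ∧
  (perpC N m k Fi
     = Fi ⊔ Submodule.span ℂ ((ev '' Set.Icc 1 (m-i-1)) ∪ (fv '' Set.Icc 1 (m-i-1)))) ∧
  (∀ j j', 1 ≤ j → j ≤ m-i → 1 ≤ j' → j' ≤ m-i →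
      betaD N m k (fv j) (ev j') = (if j + j' = m - i + 1 then (-1:ℂ)^(j-1) else 0) ∧
      betaD N m k (ev j) (ev j') = 0 ∧ betaD N m k (fv j) (fv j') = 0) ∧
  (∀ j j', 1 ≤ j → j ≤ m-i-1 → 1 ≤ j' → j' ≤ m-i-1 →
      betaC N m k (fv j) (ev j') = (if j + j' = m - i then (-1:ℂ)^(j-1) else 0) ∧
      betaC N m k (ev j') (fv j) = -(if j + j' = m - i then (-1:ℂ)^(j-1) else 0) ∧
      betaC N m k (ev j) (ev j') = 0 ∧ betaC N m k (fv j) (fv j') = 0) ∧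
  (∀ j j', 1 ≤ j → j ≤ m-i → 1 ≤ j' → j' ≤ m-i →
      (inner ℂ (ev j) (ev j') : ℂ) = (if j = j' then 1 else 0) ∧
      (inner ℂ (fv j) (fv j') : ℂ) = (if j = j' then 1 else 0) ∧
      (inner ℂ (ev j) (fv j') : ℂ) = 0) ∧
  (∀ j, 1 ≤ j → j ≤ m-i → ev j ∈ Fiᗮ ∧ fv j ∈ Fiᗮ) ∧
  (∀ j, 2 ≤ j → j ≤ m-i → Cmap N (ev j) = Cmap N (zMap N (ev j)) ∧
      Cmap N (fv j) = Cmap N (zMap N (fv j)))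


/-! ### Auxiliary material for Statement 6 -/

/-- Negation on the sphere. -/
def negSph (u : Sph) : Sph :=
  ⟨-(u : E3), by
    rw [mem_sphere_zero_iff_norm, norm_neg]
    exact mem_sphere_zero_iff_norm.mp u.2⟩

@[simp] lemma negSph_coe (u : Sph) : ((negSph u : Sph) : E3) = -(u : E3) := rfl

lemma continuous_negSph : Continuous negSph :=
  Continuous.subtype_mk continuous_subtype_val.neg _

lemma sph_coe_ne_neg (u : Sph) : (u : E3) ≠ -(u : E3) := by
  intro h
  have h2 : (u : E3) + (u : E3) = 0 := by
    nth_rewrite 1 [h]; simp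
  have h3 : (2 : ℝ) • (u : E3) = 0 := by rw [two_smul]; exact h2
  have h4 : (u : E3) = 0 := by
    rcases smul_eq_zero.mp h3 with h | h
    · norm_num at h
    · exact h
  have h5 : ‖(u : E3)‖ = 1 := mem_sphere_zero_iff_norm.mp u.2
  rw [h4, norm_zero] at h5
  norm_num at h5

lemma edge_bounds {m : ℕ} {a b : CupDiagram m} {i j : ℕ} (h : EdgeRel m a b i j) :
    1 ≤ i ∧ i ≤ m ∧ 1 ≤ j ∧ j ≤ m := by
  rcases h with h | h | h | h
  · obtain ⟨h1, h2, h3⟩ := a.cups_valid _ h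
    have h1' : 1 ≤ i := h1; have h2' : i < j := h2; have h3' : j ≤ m := h3
    omega
  · obtain ⟨h1, h2, h3⟩ := a.cups_valid _ h
    have h1' : 1 ≤ j := h1; have h2' : j < i := h2; have h3' : i ≤ m := h3
    omega
  · obtain ⟨h1, h2, h3⟩ := b.cups_valid _ h
    have h1' : 1 ≤ i := h1; have h2' : i < j := h2; have h3' : j ≤ m := h3
    omega
  · obtain ⟨h1, h2, h3⟩ := b.cups_valid _ h
    have h1' : 1 ≤ j := h1; have h2' : j < i := h2; have h3' : i ≤ m := h3
    omega

lemma edge_symm {m : ℕ} {a b : CupDiagram m} {i j : ℕ} (h : EdgeRel m a b i j) :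
    EdgeRel m a b j i := by
  unfold EdgeRel at *; tauto

lemma reach_symm {m : ℕ} {a b : CupDiagram m} {i j : ℕ} (h : Reach m a b i j) :
    Reach m a b j i :=
  haveI : Std.Symm (EdgeRel m a b) := ⟨fun _ _ h' => edge_symm h'⟩
  Relation.ReflTransGen.symmetric.symm _ _ h

lemma edge_step {m : ℕ} {a b : CupDiagram m} {x x0 : Fin m → Sph}
    (hx : x ∈ Sa m a ∩ Sa m b) (hx0 : x0 ∈ Sa m a ∩ Sa m b)
    {i j : Fin m} (h : EdgeRel m a b (i.1 + 1) (j.1 + 1)) :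
    ((x j : E3) = (x i : E3) ∧ (x0 j : E3) = (x0 i : E3)) ∨
    ((x j : E3) = -(x i : E3) ∧ (x0 j : E3) = -(x0 i : E3)) := by
  classical
  obtain ⟨⟨hxa1, _⟩, ⟨hxb1, _⟩⟩ := hx
  obtain ⟨⟨hx0a1, _⟩, ⟨hx0b1, _⟩⟩ := hx0
  rcases h with h | h | h | h
  · have hc := hxa1 i j h
    have hc0 := hx0a1 i j h
    by_cases hd : (i.1 + 1, j.1 + 1) ∈ a.dottedCups
    · exact Or.inl ⟨(hc.2 hd).symm, (hc0.2 hd).symm⟩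
    · exact Or.inr ⟨by rw [hc.1 hd, neg_neg], by rw [hc0.1 hd, neg_neg]⟩
  · have hc := hxa1 j i h
    have hc0 := hx0a1 j i h
    by_cases hd : (j.1 + 1, i.1 + 1) ∈ a.dottedCups
    · exact Or.inl ⟨hc.2 hd, hc0.2 hd⟩
    · exact Or.inr ⟨hc.1 hd, hc0.1 hd⟩
  · have hc := hxb1 i j h
    have hc0 := hx0b1 i j h
    by_cases hd : (i.1 + 1, j.1 + 1) ∈ b.dottedCups
    · exact Or.inl ⟨(hc.2 hd).symm, (hc0.2 hd).symm⟩
    · exact Or.inr ⟨by rw [hc.1 hd, neg_neg], by rw [hc0.1 hd, neg_neg]⟩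
  · have hc := hxb1 j i h
    have hc0 := hx0b1 j i h
    by_cases hd : (j.1 + 1, i.1 + 1) ∈ b.dottedCups
    · exact Or.inl ⟨hc.2 hd, hc0.2 hd⟩
    · exact Or.inr ⟨hc.1 hd, hc0.1 hd⟩

lemma sign_reach {m : ℕ} {a b : CupDiagram m} {x x0 : Fin m → Sph}
    (hx : x ∈ Sa m a ∩ Sa m b) (hx0 : x0 ∈ Sa m a ∩ Sa m b)
    {v w : ℕ} (hr : Reach m a b v w) :
    ∀ i j : Fin m, i.1 + 1 = v → j.1 + 1 = w →
      ((x j : E3) = (x i : E3) ∧ (x0 j : E3) = (x0 i : E3)) ∨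
      ((x j : E3) = -(x i : E3) ∧ (x0 j : E3) = -(x0 i : E3)) := by
  induction hr with
  | refl =>
    intro i j hi hj
    have hij : i = j := Fin.ext (by omega)
    subst hij
    exact Or.inl ⟨rfl, rfl⟩
  | @tail c w' hvc he ih =>
    intro i j hi hj
    obtain ⟨hc1, hc2, hw1, hw2⟩ := edge_bounds he
    have hclt : c - 1 < m := by omega
    set jc : Fin m := ⟨c - 1, hclt⟩ with hjcdef
    have hjc1 : jc.1 + 1 = c := by show c - 1 + 1 = c; omega
    have IH := ih i jc hi hjc1
    have ES := edge_step hx hx0 (i := jc) (j := j) (by rw [hjc1, hj]; exact he)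
    rcases IH with ⟨e1, e2⟩ | ⟨e1, e2⟩ <;> rcases ES with ⟨f1, f2⟩ | ⟨f1, f2⟩
    · exact Or.inl ⟨f1.trans e1, f2.trans e2⟩
    · exact Or.inr ⟨by rw [f1, e1], by rw [f2, e2]⟩
    · exact Or.inr ⟨by rw [f1, e1], by rw [f2, e2]⟩
    · exact Or.inl ⟨by rw [f1, e1, neg_neg], by rw [f2, e2, neg_neg]⟩

lemma ray_fixed {m : ℕ} {a b : CupDiagram m} {x x0 : Fin m → Sph}
    (hx : x ∈ Sa m a ∩ Sa m b) (hx0 : x0 ∈ Sa m a ∩ Sa m b)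
    (j : Fin m) (hr : a.HasRay (j.1 + 1) ∨ b.HasRay (j.1 + 1)) :
    (x j : E3) = (x0 j : E3) := by
  classical
  obtain ⟨⟨_, hxa2⟩, ⟨_, hxb2⟩⟩ := hx
  obtain ⟨⟨_, hx0a2⟩, ⟨_, hx0b2⟩⟩ := hx0
  rcases hr with hr | hr
  · have h1 := hxa2 j hr
    have h2 := hx0a2 j hr
    by_cases hd : j.1 + 1 ∈ a.dottedRays
    · rw [h1.1 hd, h2.1 hd]
    · by_cases hex : ∃ r, a.HasRay r ∧ j.1 + 1 < r
      · rw [(h1.2 hd).2 hex, (h2.2 hd).2 hex]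
      · push_neg at hex
        have hall : ∀ r, a.HasRay r → r ≤ j.1 + 1 := fun r h => hex r h
        rw [(h1.2 hd).1 hall, (h2.2 hd).1 hall]
  · have h1 := hxb2 j hr
    have h2 := hx0b2 j hr
    by_cases hd : j.1 + 1 ∈ b.dottedRays
    · rw [h1.1 hd, h2.1 hd]
    · by_cases hex : ∃ r, b.HasRay r ∧ j.1 + 1 < r
      · rw [(h1.2 hd).2 hex, (h2.2 hd).2 hex]
      · push_neg at hex
        have hall : ∀ r, b.HasRay r → r ≤ j.1 + 1 := fun r h => hex r h
        rw [(h1.2 hd).1 hall, (h2.2 hd).1 hall]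

lemma line_fixed {m : ℕ} {a b : CupDiagram m} {x x0 : Fin m → Sph}
    (hx : x ∈ Sa m a ∩ Sa m b) (hx0 : x0 ∈ Sa m a ∩ Sa m b)
    (i : Fin m) {w : ℕ} (hr : Reach m a b (i.1 + 1) w)
    (hray : a.HasRay w ∨ b.HasRay w) : (x i : E3) = (x0 i : E3) := by
  have hb : 1 ≤ w ∧ w ≤ m := by
    rcases hray with h | h
    · exact ⟨h.1, h.2.1⟩
    · exact ⟨h.1, h.2.1⟩
  have hwlt : w - 1 < m := by omega
  set j : Fin m := ⟨w - 1, hwlt⟩ with hjdef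
  have hj : j.1 + 1 = w := by show w - 1 + 1 = w; omega
  have hS := sign_reach hx hx0 hr i j rfl hj
  have hF := ray_fixed hx hx0 j (by rw [hj]; exact hray)
  rcases hS with ⟨e1, e2⟩ | ⟨e1, e2⟩
  · rw [← e1, hF, e2]
  · have hxi : (x i : E3) = -(x j : E3) := by rw [e1, neg_neg]
    rw [hxi, hF, e2, neg_neg]

/-- If `S_a ∩ S_b ≠ ∅` then `S_a ∩ S_b` is homeomorphic to `(S²)^circ`,
where `circ` is the number of closed connected components of the circle diagram of `a`
and `b`. -/
theorem statement6 (m k : ℕ) (hm : 1 ≤ m) (hk1 : 1 ≤ k) (hk2 : k ≤ m) (hkadm : k = m ∨ Odd k)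
    (a b : CupDiagram m) (ha : a.cups.card = k / 2) (hb : b.cups.card = k / 2)
    (hne : (Sa m a ∩ Sa m b).Nonempty) :
    Nonempty (↥(Sa m a ∩ Sa m b) ≃ₜ (Fin (numClosed m a b) → Sph)) := by
  classical
  obtain ⟨x0, hx0⟩ := hne
  set Comps : Set (Set ℕ) := {s : Set ℕ | ∃ v, 1 ≤ v ∧ v ≤ m ∧ IsClosedCompAt m a b v ∧
      s = {w | Reach m a b v w}} with hComps
  have hfin : Comps.Finite := by
    apply Set.Finite.subset (Set.Finite.image (f := fun v => {w | Reach m a b v w})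
      (Set.finite_Icc 1 m))
    rintro s ⟨v, hv1, hv2, _, rfl⟩
    exact ⟨v, ⟨hv1, hv2⟩, rfl⟩
  have hnum : numClosed m a b = hfin.toFinset.card := by
    have h1 : numClosed m a b = Comps.ncard := by rw [hComps]; rfl
    rw [h1, Set.ncard_eq_toFinset_card _ hfin]
  -- choose representatives of closed components
  have hrepex : ∀ s : {t // t ∈ hfin.toFinset}, ∃ v, 1 ≤ v ∧ v ≤ m ∧
      IsClosedCompAt m a b v ∧ (s : Set ℕ) = {w | Reach m a b v w} := by
    intro s
    exact hfin.mem_toFinset.mp s.2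
  choose rep hrep1 hrep2 hrep3 hrep4 using hrepex
  have hmlt : ∀ s : {t // t ∈ hfin.toFinset}, rep s - 1 < m := by
    intro s
    have h1 := hrep1 s; have h2 := hrep2 s; omega
  set repIdx : {t // t ∈ hfin.toFinset} → Fin m := fun s => ⟨rep s - 1, hmlt s⟩
    with hrepIdxdef
  have hrepIdx : ∀ s, (repIdx s).1 + 1 = rep s := by
    intro s
    have h1 := hrep1 s
    show rep s - 1 + 1 = rep s
    omega
  have hmem_reach : ∀ (s : {t // t ∈ hfin.toFinset}) (w : ℕ), w ∈ (s : Set ℕ) →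
      Reach m a b (rep s) w := by
    intro s w hw
    have h4 := hrep4 s
    rw [h4] at hw
    exact hw
  have hmem_of_reach : ∀ (s : {t // t ∈ hfin.toFinset}) (w w' : ℕ), w ∈ (s : Set ℕ) →
      Reach m a b w w' → w' ∈ (s : Set ℕ) := by
    intro s w w' hw hr
    rw [hrep4 s]
    exact (hmem_reach s w hw).trans hr
  have hrep_mem : ∀ s : {t // t ∈ hfin.toFinset}, rep s ∈ (s : Set ℕ) := by
    intro s
    rw [hrep4 s]
    exact Relation.ReflTransGen.refl
  have huniq : ∀ (s s' : {t // t ∈ hfin.toFinset}) (w : ℕ), w ∈ (s : Set ℕ) →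
      w ∈ (s' : Set ℕ) → s = s' := by
    intro s s' w hw hw'
    apply Subtype.ext
    rw [hrep4 s, hrep4 s']
    have h1 : Reach m a b (rep s) w := hmem_reach s w hw
    have h2 : Reach m a b (rep s') w := hmem_reach s' w hw'
    ext u
    constructor
    · intro hu
      exact (h2.trans (reach_symm h1)).trans hu
    · intro hu
      exact (h1.trans (reach_symm h2)).trans hu
  set eC : {t // t ∈ hfin.toFinset} ≃ Fin (numClosed m a b) :=
    hfin.toFinset.equivFin.trans (finCongr hnum.symm) with heC
  have hx0sign : ∀ (s : {t // t ∈ hfin.toFinset}) (i : Fin m), (i.1 + 1) ∈ (s : Set ℕ) →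
      (x0 i : E3) = (x0 (repIdx s) : E3) ∨ (x0 i : E3) = -(x0 (repIdx s) : E3) := by
    intro s i hi
    have hr : Reach m a b (rep s) (i.1 + 1) := hmem_reach s _ hi
    have h := sign_reach hx0 hx0 hr (repIdx s) i (hrepIdx s) rfl
    tauto
  have hxsign : ∀ (x : Fin m → Sph), x ∈ Sa m a ∩ Sa m b →
      ∀ (s : {t // t ∈ hfin.toFinset}) (i : Fin m), (i.1 + 1) ∈ (s : Set ℕ) →
      ((x i : E3) = (x (repIdx s) : E3) ∧ (x0 i : E3) = (x0 (repIdx s) : E3)) ∨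
      ((x i : E3) = -(x (repIdx s) : E3) ∧ (x0 i : E3) = -(x0 (repIdx s) : E3)) :=
    fun x hx s i hi => sign_reach hx hx0 (hmem_reach s _ hi) (repIdx s) i (hrepIdx s) rfl
  set Psi : (Fin (numClosed m a b) → Sph) → Fin m → Sph := fun y i =>
    if h : ∃ s : {t // t ∈ hfin.toFinset}, (i.1 + 1) ∈ (s : Set ℕ) then
      (if (x0 i : E3) = (x0 (repIdx h.choose) : E3) then y (eC h.choose)
       else negSph (y (eC h.choose)))
    else x0 i with hPsi
  have hPsi_pos : ∀ y (i : Fin m) (s : {t // t ∈ hfin.toFinset}), (i.1 + 1) ∈ (s : Set ℕ) →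
      Psi y i = (if (x0 i : E3) = (x0 (repIdx s) : E3) then y (eC s)
                 else negSph (y (eC s))) := by
    intro y i s hi
    have h : ∃ s : {t // t ∈ hfin.toFinset}, (i.1 + 1) ∈ (s : Set ℕ) := ⟨s, hi⟩
    have hcs : h.choose = s := huniq _ _ _ h.choose_spec hi
    simp only [hPsi]
    rw [dif_pos h, hcs]
  have hPsi_neg : ∀ y (i : Fin m), (¬ ∃ s : {t // t ∈ hfin.toFinset},
      (i.1 + 1) ∈ (s : Set ℕ)) → Psi y i = x0 i := by
    intro y i h
    simp only [hPsi]
    rw [dif_neg h]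
  have hline : ∀ i : Fin m, (¬ ∃ s : {t // t ∈ hfin.toFinset}, (i.1 + 1) ∈ (s : Set ℕ)) →
      ∃ w, Reach m a b (i.1 + 1) w ∧ (a.HasRay w ∨ b.HasRay w) := by
    intro i h
    by_contra hcon
    push_neg at hcon
    have hclosed : IsClosedCompAt m a b (i.1 + 1) := by
      intro w hw
      exact hcon w hw
    have hmem : {w | Reach m a b (i.1 + 1) w} ∈ Comps := by
      rw [hComps]
      exact ⟨i.1 + 1, by omega, i.isLt, hclosed, rfl⟩
    exact h ⟨⟨_, hfin.mem_toFinset.mpr hmem⟩, Relation.ReflTransGen.refl⟩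
  -- the key sign-compatibility of Psi along edges
  have hcup : ∀ y (i j : Fin m), EdgeRel m a b (i.1 + 1) (j.1 + 1) →
      (((x0 i : E3) = (x0 j : E3) → (Psi y i : E3) = (Psi y j : E3)) ∧
       ((x0 i : E3) = -(x0 j : E3) → (Psi y i : E3) = -(Psi y j : E3))) := by
    intro y i j hedge
    by_cases hi : ∃ s : {t // t ∈ hfin.toFinset}, (i.1 + 1) ∈ (s : Set ℕ)
    · obtain ⟨s, hsi⟩ := hi
      have hsj : (j.1 + 1) ∈ (s : Set ℕ) :=
        hmem_of_reach s _ _ hsi (Relation.ReflTransGen.single hedge)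
      rw [hPsi_pos y i s hsi, hPsi_pos y j s hsj]
      have di := hx0sign s i hsi
      have dj := hx0sign s j hsj
      constructor
      · intro h0
        by_cases hcj : (x0 j : E3) = (x0 (repIdx s) : E3)
        · rw [if_pos hcj, if_pos (h0.trans hcj)]
        · rw [if_neg hcj, if_neg (fun hh => hcj (h0.symm.trans hh))]
      · intro h0
        by_cases hcj : (x0 j : E3) = (x0 (repIdx s) : E3)
        · have hci : ¬ ((x0 i : E3) = (x0 (repIdx s) : E3)) := by
            intro hci
            exact sph_coe_ne_neg (x0 j) ((hci.trans hcj.symm).symm.trans h0)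
          rw [if_pos hcj, if_neg hci]
          simp
        · have hdj : (x0 j : E3) = -(x0 (repIdx s) : E3) := dj.resolve_left hcj
          have hci : (x0 i : E3) = (x0 (repIdx s) : E3) := by
            rw [h0, hdj, neg_neg]
          rw [if_pos hci, if_neg hcj]
          simp
    · have hj : ¬ ∃ s : {t // t ∈ hfin.toFinset}, (j.1 + 1) ∈ (s : Set ℕ) := by
        rintro ⟨s, hsj⟩
        exact hi ⟨s, hmem_of_reach s _ _ hsj (reach_symm (Relation.ReflTransGen.single hedge))⟩
      rw [hPsi_neg y i hi, hPsi_neg y j hj]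
      exact ⟨id, id⟩
  have hPsiMem : ∀ y, Psi y ∈ Sa m a ∩ Sa m b := by
    intro y
    have hx0a : x0 ∈ Sa m a := hx0.1
    have hx0b : x0 ∈ Sa m b := hx0.2
    have hray_eq : ∀ i : Fin m, (a.HasRay (i.1 + 1) ∨ b.HasRay (i.1 + 1)) →
        Psi y i = x0 i := by
      intro i hray
      apply hPsi_neg
      rintro ⟨s, hsi⟩
      have hr := hmem_reach s _ hsi
      rcases hray with hray | hray
      · exact ((hrep3 s) _ hr).1 hray
      · exact ((hrep3 s) _ hr).2 hray
    constructor
    · constructor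
      · intro i j hc
        have H := hcup y i j (Or.inl hc)
        have H0 := hx0a.1 i j hc
        exact ⟨fun hnd => H.2 (H0.1 hnd), fun hd => H.1 (H0.2 hd)⟩
      · intro i hray
        rw [hray_eq i (Or.inl hray)]
        exact hx0a.2 i hray
    · constructor
      · intro i j hc
        have H := hcup y i j (Or.inr (Or.inr (Or.inl hc)))
        have H0 := hx0b.1 i j hc
        exact ⟨fun hnd => H.2 (H0.1 hnd), fun hd => H.1 (H0.2 hd)⟩
      · intro i hray
        rw [hray_eq i (Or.inr hray)]
        exact hx0b.2 i hray
  set Phi : ↥(Sa m a ∩ Sa m b) → (Fin (numClosed m a b) → Sph) :=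
    fun x c => x.1 (repIdx (eC.symm c)) with hPhi
  have hPhiCont : Continuous Phi :=
    continuous_pi fun c => (continuous_apply _).comp continuous_subtype_val
  have hPsiCont : Continuous Psi := by
    apply continuous_pi
    intro i
    by_cases h : ∃ s : {t // t ∈ hfin.toFinset}, (i.1 + 1) ∈ (s : Set ℕ)
    · have he : (fun y => Psi y i) = fun y =>
          (if (x0 i : E3) = (x0 (repIdx h.choose) : E3) then y (eC h.choose)
           else negSph (y (eC h.choose))) := by
        funext y
        simp only [hPsi]
        rw [dif_pos h]
      rw [he]
      by_cases h2 : (x0 i : E3) = (x0 (repIdx h.choose) : E3)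
      · simp only [if_pos h2]
        exact continuous_apply _
      · simp only [if_neg h2]
        exact continuous_negSph.comp (continuous_apply _)
    · have he : (fun y => Psi y i) = fun _ => x0 i := by
        funext y
        simp only [hPsi]
        rw [dif_neg h]
      rw [he]
      exact continuous_const
  have hleft : ∀ x : ↥(Sa m a ∩ Sa m b), Psi (Phi x) = x.1 := by
    intro x
    funext i
    by_cases h : ∃ s : {t // t ∈ hfin.toFinset}, (i.1 + 1) ∈ (s : Set ℕ)
    · obtain ⟨s, hsi⟩ := h
      rw [hPsi_pos (Phi x) i s hsi]
      have hval : Phi x (eC s) = x.1 (repIdx s) := by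
        simp only [hPhi, Equiv.symm_apply_apply]
      have hsgn := hxsign x.1 x.2 s i hsi
      apply Subtype.ext
      rcases hsgn with ⟨e1, e2⟩ | ⟨e1, e2⟩
      · rw [if_pos e2, hval]
        exact (congrArg _ rfl).trans e1.symm
      · have hcond : ¬ ((x0 i : E3) = (x0 (repIdx s) : E3)) := fun hc =>
          sph_coe_ne_neg (x0 (repIdx s)) (hc.symm.trans e2)
        rw [if_neg hcond]
        show -(((Phi x) (eC s) : Sph) : E3) = ((x.1 i : Sph) : E3)
        rw [hval, ← e1]
    · rw [hPsi_neg _ i h]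
      obtain ⟨w, hw, hray⟩ := hline i h
      exact Subtype.ext ((line_fixed x.2 hx0 i hw hray)).symm
  have hright : ∀ y, Phi ⟨Psi y, hPsiMem y⟩ = y := by
    intro y
    funext c
    show Psi y (repIdx (eC.symm c)) = y c
    have hmem : ((repIdx (eC.symm c)).1 + 1) ∈ ((eC.symm c : {t // t ∈ hfin.toFinset}) : Set ℕ) := by
      rw [hrepIdx (eC.symm c)]
      exact hrep_mem (eC.symm c)
    rw [hPsi_pos y _ (eC.symm c) hmem, if_pos rfl, Equiv.apply_symm_apply]
  exact ⟨⟨⟨Phi, fun y => ⟨Psi y, hPsiMem y⟩, fun x => Subtype.ext (hleft x), hright⟩,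
    hPhiCont, hPsiCont.subtype_mk _⟩⟩

end Spr
end
end

section
/- Let 1 ≤ k ≤ m with k = m or k odd. If a ∈ B^{n-k,k}_even (a has an even total number of dots) and b ∈ B^{n-k,k}_odd (b has an odd total number of dots), then S_a ∩ S_b = ∅. Consequently the topological Springer fiber S^{n-k,k}_D is the disjoint union of S^{n-k,k}_{D,even} = ⋃_{a ∈ B^{n-k,k}_even} S_a and S^{n-k,k}_{D,odd} = ⋃_{a ∈ B^{n-k,k}_odd} S_a. -/
noncomputable section
namespace Spr

/-! ### Auxiliary lemmas for Statement 7 -/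


noncomputable def sgn3 (v : E3) : ℝ :=
  if 0 < v 0 then 1 else if v 0 < 0 then -1
  else if 0 < v 1 then 1 else if v 1 < 0 then -1
  else if 0 < v 2 then 1 else -1

lemma sgn3_eq_or (v : E3) : sgn3 v = 1 ∨ sgn3 v = -1 := by
  unfold sgn3; split_ifs <;> simp

lemma sgn3_sq (v : E3) : sgn3 v * sgn3 v = 1 := by
  rcases sgn3_eq_or v with h | h <;> rw [h] <;> ring

set_option maxHeartbeats 1000000 in
lemma sgn3_neg (v : E3) (hv : v ≠ 0) : sgn3 (-v) = - sgn3 v := by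
  have hne : v 0 ≠ 0 ∨ v 1 ≠ 0 ∨ v 2 ≠ 0 := by
    by_contra h
    push_neg at h
    apply hv
    ext i
    fin_cases i <;> simp [h.1, h.2.1, h.2.2]
  have h0 : (-v) 0 = -(v 0) := by simp
  have h1 : (-v) 1 = -(v 1) := by simp
  have h2 : (-v) 2 = -(v 2) := by simp
  unfold sgn3
  rw [h0, h1, h2]
  rcases hne with h | h | h <;> rcases h.lt_or_gt with h | h <;> split_ifs <;>
    first | rfl | linarith | norm_num

lemma sgn3_pPt : sgn3 pPt = 1 := by
  have h0 : pPt 0 = 0 := by simp [pPt, EuclideanSpace.single_apply]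
  have h1 : pPt 1 = 0 := by simp [pPt, EuclideanSpace.single_apply]
  have h2 : pPt 2 = 1 := by simp [pPt, EuclideanSpace.single_apply]
  unfold sgn3; rw [h0, h1, h2]; norm_num

lemma pPt_ne_zero : pPt ≠ 0 := by
  intro h
  have := congrArg (fun w : E3 => w 2) h
  simp [pPt, EuclideanSpace.single_apply] at this

lemma sgn3_neg_pPt : sgn3 (-pPt) = -1 := by
  rw [sgn3_neg _ pPt_ne_zero, sgn3_pPt]

lemma sgn3_qPt : sgn3 qPt = 1 := by
  have h0 : qPt 0 = 1 := by simp [qPt, EuclideanSpace.single_apply]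
  unfold sgn3; rw [h0]; norm_num

def vtx {m : ℕ} (hm : 1 ≤ m) (j : ℕ) : Fin m := ⟨(j-1) % m, Nat.mod_lt _ (by omega)⟩

lemma vtx_val {m : ℕ} (hm : 1 ≤ m) {j : ℕ} (h1 : 1 ≤ j) (h2 : j ≤ m) :
    (vtx hm j).val = j - 1 := Nat.mod_eq_of_lt (by omega)

lemma vtx_succ {m : ℕ} (hm : 1 ≤ m) {j : ℕ} (h1 : 1 ≤ j) (h2 : j ≤ m) :
    (vtx hm j).val + 1 = j := by rw [vtx_val hm h1 h2]; omega

lemma neg_one_pow_congr {s t : ℕ} (h : s % 2 = t % 2) : (-1:ℝ)^s = (-1)^t := by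
  conv_lhs => rw [← Nat.div_add_mod s 2]
  conv_rhs => rw [← Nat.div_add_mod t 2]
  rw [h]
  simp [pow_add, pow_mul]

open Finset in
lemma prod_sgn3 {m : ℕ} (hm : 1 ≤ m) (a : CupDiagram m) (x : Fin m → Sph)
    (hx : x ∈ Sa m a) :
    (∏ i : Fin m, sgn3 (x i : E3)) =
      (-1:ℝ)^(a.cups.card + a.dots) * (if 2 * a.cups.card < m then -1 else 1) := by
  classical
  obtain ⟨hxc, hxr⟩ := hx
  set g : Fin m → ℝ := fun i => sgn3 (x i : E3) with hg
  set P : Fin m → Prop := fun i => ∃ p ∈ a.cups, i.val + 1 = p.1 ∨ i.val + 1 = p.2 with hP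
  -- the cup part
  have hset : Finset.univ.filter P
      = a.cups.biUnion (fun p => {vtx hm p.1, vtx hm p.2}) := by
    ext i
    simp only [mem_filter, mem_univ, true_and, mem_biUnion, mem_insert, mem_singleton, hP]
    constructor
    · rintro ⟨p, hp, h | h⟩ <;> refine ⟨p, hp, ?_⟩
      · left; apply Fin.ext
        obtain ⟨h1, h2, h3⟩ := a.cups_valid p hp
        rw [vtx_val hm h1 (by omega)]; omega
      · right; apply Fin.ext
        obtain ⟨h1, h2, h3⟩ := a.cups_valid p hp
        rw [vtx_val hm (by omega) h3]; omega
    · rintro ⟨p, hp, h | h⟩ <;> refine ⟨p, hp, ?_⟩ <;>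
        [left; right] <;> (obtain ⟨h1, h2, h3⟩ := a.cups_valid p hp; rw [h])
      · exact vtx_succ hm h1 (by omega)
      · exact vtx_succ hm (by omega) h3
  have hvne : ∀ p ∈ a.cups, vtx (m := m) hm p.1 ≠ vtx hm p.2 := by
    intro p hp
    obtain ⟨h1, h2, h3⟩ := a.cups_valid p hp
    intro h
    have := congrArg Fin.val h
    rw [vtx_val hm h1 (by omega), vtx_val hm (by omega) h3] at this
    omega
  have hdisj : (↑a.cups : Set (ℕ × ℕ)).PairwiseDisjoint
      (fun p => ({vtx hm p.1, vtx hm p.2} : Finset (Fin m))) := by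
    intro p hp q hq hne
    simp only [Finset.mem_coe] at hp hq
    obtain ⟨hp1, hp2, hp3⟩ := a.cups_valid p hp
    obtain ⟨hq1, hq2, hq3⟩ := a.cups_valid q hq
    obtain ⟨d1, d2, d3, d4⟩ := a.cups_disjoint p hp q hq hne
    refine Finset.disjoint_left.mpr ?_
    intro z hz hz'
    simp only [mem_insert, mem_singleton] at hz hz'
    have key : ∀ u v : ℕ, 1 ≤ u → u ≤ m → 1 ≤ v → v ≤ m →
        vtx (m := m) hm u = vtx hm v → u = v := by
      intro u v hu1 hu2 hv1 hv2 h
      have := congrArg Fin.val h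
      rw [vtx_val hm hu1 hu2, vtx_val hm hv1 hv2] at this
      omega
    rcases hz with rfl | rfl <;> rcases hz' with h | h
    · exact d1 (key _ _ hp1 (by omega) hq1 (by omega) h)
    · exact d2 (key _ _ hp1 (by omega) (by omega) hq3 h)
    · exact d3 (key _ _ (by omega) hp3 hq1 (by omega) h)
    · exact d4 (key _ _ (by omega) hp3 (by omega) hq3 h)
  have hcup : ∏ i ∈ Finset.univ.filter P, g i
      = (-1:ℝ)^(a.cups.card - a.dottedCups.card) := by
    rw [hset, Finset.prod_biUnion hdisj]
    have h1 : ∀ p ∈ a.cups,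
        (∏ i ∈ ({vtx hm p.1, vtx hm p.2} : Finset (Fin m)), g i)
          = if p ∈ a.dottedCups then (1:ℝ) else -1 := by
      intro p hp
      rw [Finset.prod_pair (hvne p hp)]
      obtain ⟨h1, h2, h3⟩ := a.cups_valid p hp
      have hiv : (vtx (m := m) hm p.1).val + 1 = p.1 := vtx_succ hm h1 (by omega)
      have hjv : (vtx (m := m) hm p.2).val + 1 = p.2 := vtx_succ hm (by omega) h3
      have hp' : ((vtx (m := m) hm p.1).val + 1, (vtx (m := m) hm p.2).val + 1) ∈ a.cups := by
        rw [hiv, hjv]; exact hp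
      have hrel := hxc (vtx hm p.1) (vtx hm p.2) hp'
      by_cases hd : p ∈ a.dottedCups
      · have : ((vtx (m := m) hm p.1).val + 1, (vtx (m := m) hm p.2).val + 1) ∈ a.dottedCups := by
          rw [hiv, hjv]; exact hd
        have heq := hrel.2 this
        simp only [hg, hd, if_pos]
        rw [heq, sgn3_sq]
      · have : ((vtx (m := m) hm p.1).val + 1, (vtx (m := m) hm p.2).val + 1) ∉ a.dottedCups := by
          rw [hiv, hjv]; exact hd
        have heq := hrel.1 this
        simp only [hg, hd, if_neg, not_false_iff]
        rw [heq, sgn3_neg _ (ne_zero_of_mem_unit_sphere _), neg_mul, sgn3_sq]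
    rw [Finset.prod_congr rfl h1, Finset.prod_ite]
    simp only [Finset.prod_const, one_pow, one_mul]
    congr 1
    rw [← Finset.sdiff_eq_filter, Finset.card_sdiff_of_subset a.dottedCups_sub]
  -- ray vertices
  set R : Finset (Fin m) := Finset.univ.filter (fun i => ¬ P i) with hR
  have hray : ∀ i ∈ R, a.HasRay (i.val + 1) := by
    intro i hi
    simp only [hR, mem_filter, mem_univ, true_and, hP] at hi
    push_neg at hi
    exact ⟨by omega, by omega, fun p hp => ⟨(hi p hp).1, (hi p hp).2⟩⟩
  have hrayR : ∀ r : ℕ, a.HasRay r → vtx (m := m) hm r ∈ R ∧ (vtx (m := m) hm r).val + 1 = r := by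
    intro r hr
    obtain ⟨hr1, hr2, hr3⟩ := hr
    have hv : (vtx (m := m) hm r).val + 1 = r := vtx_succ hm hr1 hr2
    refine ⟨?_, hv⟩
    simp only [hR, mem_filter, mem_univ, true_and, hP]
    rintro ⟨p, hp, h | h⟩
    · exact (hr3 p hp).1 (by omega)
    · exact (hr3 p hp).2 (by omega)
  have hcard2 : (Finset.univ.filter P).card = 2 * a.cups.card := by
    rw [hset, Finset.card_biUnion hdisj]
    rw [Finset.sum_congr rfl (fun p hp => Finset.card_pair (hvne p hp))]
    rw [Finset.sum_const, smul_eq_mul, mul_comm]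
  have hcardR : R.card + 2 * a.cups.card = m := by
    have h2 := Finset.card_filter_add_card_filter_not
      (s := (Finset.univ : Finset (Fin m))) (p := P)
    rw [hcard2, ← hR] at h2
    simp only [Finset.card_univ, Fintype.card_fin] at h2
    omega
  have hsplit := Finset.prod_filter_mul_prod_filter_not Finset.univ P g
  rw [hcup, ← hR] at hsplit
  by_cases hrays : 2 * a.cups.card < m
  · -- there is at least one ray
    have hRne : R.Nonempty := by
      rw [← Finset.card_pos]; omega
    set M := R.max' hRne with hM
    have hMR : M ∈ R := R.max'_mem hRne
    have hMray : a.HasRay (M.val + 1) := hray M hMR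
    have hmax : ∀ r, a.HasRay r → r ≤ M.val + 1 := by
      intro r hr
      obtain ⟨hmem, hv⟩ := hrayR r hr
      have := R.le_max' _ hmem
      omega
    have hdrsub : ∀ r ∈ a.dottedRays, r = M.val + 1 := by
      intro r hrd
      obtain ⟨hr1, hr2, hr3⟩ := a.dottedRays_valid r hrd
      have hr : a.HasRay r := ⟨hr1, hr2, hr3⟩
      have hle := hmax r hr
      by_contra hne
      have hlt : r < M.val + 1 := by omega
      obtain ⟨q, hq, hq'⟩ := a.dottedRays_cond r hrd (M.val + 1) hlt (by omega)
      rcases hq' with h | h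
      · exact (hMray.2.2 q hq).1 h
      · exact (hMray.2.2 q hq).2 h
    have hothers : ∀ i ∈ R, i ≠ M → g i = 1 := by
      intro i hi hne
      have hri := hray i hi
      have hiM : i.val < M.val := by
        have := R.le_max' i hi
        exact lt_of_le_of_ne this (fun h => hne (Fin.ext h))
      have hnd : i.val + 1 ∉ a.dottedRays := by
        intro h
        have := hdrsub _ h
        omega
      have := ((hxr i hri).2 hnd).2 ⟨M.val + 1, hMray, by omega⟩
      simp only [hg]
      rw [this, sgn3_qPt]
    have hprodR : ∏ i ∈ R, g i = g M :=
      Finset.prod_eq_single_of_mem M hMR (fun i hi hne => hothers i hi hne)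
    by_cases hMd : M.val + 1 ∈ a.dottedRays
    · have hxM : (x M : E3) = pPt := (hxr M hMray).1 hMd
      have hgM : g M = 1 := by simp only [hg]; rw [hxM, sgn3_pPt]
      have hdrcard : a.dottedRays = {M.val + 1} := by
        apply Finset.eq_singleton_iff_unique_mem.mpr
        exact ⟨hMd, fun r hr => hdrsub r hr⟩
      rw [hprodR, hgM, mul_one] at hsplit
      rw [← hsplit, if_pos hrays]
      rw [CupDiagram.dots, hdrcard, Finset.card_singleton]
      have hsub := Finset.card_le_card a.dottedCups_sub
      rw [show (-1:ℝ)^(a.cups.card + (a.dottedCups.card + 1))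
            * -1 = (-1)^(a.cups.card + (a.dottedCups.card + 1) + 1) by ring]
      exact neg_one_pow_congr (by omega)
    · have hxM : (x M : E3) = -pPt := ((hxr M hMray).2 hMd).1 hmax
      have hgM : g M = -1 := by simp only [hg]; rw [hxM, sgn3_neg_pPt]
      have hdrcard : a.dottedRays = ∅ := by
        apply Finset.eq_empty_iff_forall_notMem.mpr
        intro r hr
        exact hMd (hdrsub r hr ▸ hr)
      rw [hprodR, hgM] at hsplit
      rw [← hsplit, if_pos hrays]
      rw [CupDiagram.dots, hdrcard, Finset.card_empty]
      have hsub := Finset.card_le_card a.dottedCups_sub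
      rw [show (-1:ℝ)^(a.cups.card + (a.dottedCups.card + 0))
            * -1 = (-1)^(a.cups.card + (a.dottedCups.card + 0) + 1) by ring]
      rw [show (-1:ℝ)^(a.cups.card - a.dottedCups.card)
            * -1 = (-1)^(a.cups.card - a.dottedCups.card + 1) by ring]
      exact neg_one_pow_congr (by omega)
  · -- no rays
    have hRe : R = ∅ := by
      rw [← Finset.card_eq_zero]; omega
    have hdre : a.dottedRays = ∅ := by
      apply Finset.eq_empty_iff_forall_notMem.mpr
      intro r hr
      obtain ⟨hr1, hr2, hr3⟩ := a.dottedRays_valid r hr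
      have := (hrayR r ⟨hr1, hr2, hr3⟩).1
      rw [hRe] at this
      exact absurd this (Finset.notMem_empty _)
    rw [hRe, Finset.prod_empty, mul_one] at hsplit
    rw [← hsplit, if_neg hrays, CupDiagram.dots, hdre, Finset.card_empty, mul_one]
    have hsub := Finset.card_le_card a.dottedCups_sub
    exact neg_one_pow_congr (by omega)


/-- If `a ∈ B^{n-k,k}_even` and `b ∈ B^{n-k,k}_odd` then `S_a ∩ S_b = ∅`;
consequently the topological Springer fiber is the disjoint union of its even and odd
parts. -/
theorem statement7 (m k : ℕ) (hm : 1 ≤ m) (hk1 : 1 ≤ k) (hk2 : k ≤ m) (hkadm : k = m ∨ Odd k) :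
    (∀ a b : CupDiagram m, a.cups.card = k / 2 → b.cups.card = k / 2 →
      Even a.dots → Odd b.dots → Sa m a ∩ Sa m b = ∅) ∧
    (⋃ a ∈ {a : CupDiagram m | a.cups.card = k / 2}, Sa m a)
      = (⋃ a ∈ {a : CupDiagram m | a.cups.card = k / 2 ∧ Even a.dots}, Sa m a)
        ∪ (⋃ a ∈ {a : CupDiagram m | a.cups.card = k / 2 ∧ Odd a.dots}, Sa m a) ∧
    Disjoint (⋃ a ∈ {a : CupDiagram m | a.cups.card = k / 2 ∧ Even a.dots}, Sa m a)
      (⋃ a ∈ {a : CupDiagram m | a.cups.card = k / 2 ∧ Odd a.dots}, Sa m a) := by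
  classical
  have key : ∀ a b : CupDiagram m, a.cups.card = k / 2 → b.cups.card = k / 2 →
      Even a.dots → Odd b.dots → Sa m a ∩ Sa m b = ∅ := by
    intro a b hca hcb hea hob
    rw [Set.eq_empty_iff_forall_notMem]
    rintro x ⟨hxa, hxb⟩
    have h1 := prod_sgn3 hm a x hxa
    have h2 := prod_sgn3 hm b x hxb
    rw [hca] at h1
    rw [hcb] at h2
    rw [h1] at h2
    set E : ℝ := if 2 * (k/2) < m then -1 else 1 with hE
    have hEne : E ≠ 0 := by rw [hE]; split <;> norm_num
    have h3 : (-1:ℝ)^(k/2 + a.dots) = (-1)^(k/2 + b.dots) := mul_right_cancel₀ hEne h2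
    rw [pow_add, pow_add] at h3
    have h4 : (-1:ℝ)^(a.dots) = (-1)^(b.dots) :=
      mul_left_cancel₀ (pow_ne_zero _ (by norm_num)) h3
    rw [hea.neg_one_pow, hob.neg_one_pow] at h4
    norm_num at h4
  refine ⟨key, ?_, ?_⟩
  · ext x
    simp only [Set.mem_iUnion, Set.mem_union, Set.mem_setOf_eq, exists_prop]
    constructor
    · rintro ⟨a, ha, hx⟩
      rcases Nat.even_or_odd a.dots with h | h
      · exact Or.inl ⟨a, ⟨ha, h⟩, hx⟩
      · exact Or.inr ⟨a, ⟨ha, h⟩, hx⟩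
    · rintro (⟨a, ⟨ha, _⟩, hx⟩ | ⟨a, ⟨ha, _⟩, hx⟩) <;> exact ⟨a, ha, hx⟩
  · rw [Set.disjoint_left]
    intro x hxe hxo
    simp only [Set.mem_iUnion, Set.mem_setOf_eq, exists_prop] at hxe hxo
    obtain ⟨a, ⟨hca, hea⟩, hxa⟩ := hxe
    obtain ⟨b, ⟨hcb, hob⟩, hxb⟩ := hxo
    have h := key a b hca hcb hea hob
    rw [Set.eq_empty_iff_forall_notMem] at h
    exact h x ⟨hxa, hxb⟩


end Spr
end
end

section
/- Let 3 ≤ k ≤ m with k = m or k odd, and let U ⊆ V be a complex subspace. If z(U) is contained in E_{n-k-2,k-2} and z(U) is isotropic with respect to β_D^{n-k-2,k-2}, then U is contained in E_{n-k,k} and U is isotropic with respect to β_D^{n-k,k}. -/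
noncomputable section
namespace Spr

/-! ### Auxiliary lemmas for statement11 -/

lemma zMap_apply' (N : ℕ) (v : Vsp N) (j : Fin (2*N)) :
    zMap N v j = if h : j.val + 1 < 2*N ∧ j.val + 1 ≠ N then v ⟨j.val+1, h.1⟩ else 0 := by rfl

lemma sum_single' (N : ℕ) (v : Vsp N) :
    v = ∑ q : Fin (2*N), v q • (EuclideanSpace.single q (1:ℂ)) := by
  ext j
  rw [WithLp.ofLp_sum, Finset.sum_apply]
  simp [EuclideanSpace.single_apply]

/-- The coordinate submodule `{v : v_q = 0 for q outside the support of E_{a,b}}`. -/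
def Ecoord (N a b : ℕ) : Submodule ℂ (Vsp N) where
  carrier := {v | ∀ q : Fin (2*N), ((q.val < N ∧ a ≤ q.val) ∨ (N + b ≤ q.val)) → v q = 0}
  add_mem' := by
    intro x y hx hy q hq
    have : (x + y) q = x q + y q := rfl
    rw [this, hx q hq, hy q hq, add_zero]
  zero_mem' := by intro q hq; rfl
  smul_mem' := by
    intro c x hx q hq
    have : (c • x) q = c * x q := rfl
    rw [this, hx q hq, mul_zero]

lemma mem_Ecoord {N a b : ℕ} {v : Vsp N} :
    v ∈ Ecoord N a b ↔
      ∀ q : Fin (2*N), ((q.val < N ∧ a ≤ q.val) ∨ (N + b ≤ q.val)) → v q = 0 := Iff.rfl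

lemma esub_le_ecoord (N a b : ℕ) : Esub N a b ≤ Ecoord N a b := by
  rw [Esub, Submodule.span_le]
  rintro v (⟨i, hi, rfl⟩ | ⟨j, hj, rfl⟩)
  · simp only [Set.mem_Icc] at hi
    intro q hq
    rw [eVec]
    split_ifs with h
    · rw [EuclideanSpace.single_apply]
      rw [if_neg]
      intro hqe
      have : q.val = i - 1 := by rw [hqe]
      omega
    · rfl
  · simp only [Set.mem_Icc] at hj
    intro q hq
    rw [fVec]
    split_ifs with h
    · rw [EuclideanSpace.single_apply]
      rw [if_neg]
      intro hqe
      have : q.val = N + j - 1 := by rw [hqe]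
      omega
    · rfl

lemma ecoord_le_esub (N a b : ℕ) (hb : b ≤ N) : Ecoord N a b ≤ Esub N a b := by
  intro v hv
  rw [sum_single' N v]
  apply Submodule.sum_mem
  intro q _
  by_cases hq : v q = 0
  · rw [hq, zero_smul]; exact Submodule.zero_mem _
  · apply Submodule.smul_mem
    apply Submodule.subset_span
    have hgood : ¬((q.val < N ∧ a ≤ q.val) ∨ (N + b ≤ q.val)) := fun h => hq (hv q h)
    push_neg at hgood
    obtain ⟨h1, h2⟩ := hgood
    by_cases hqN : q.val < N
    · left
      refine ⟨q.val + 1, Set.mem_Icc.2 ⟨by omega, by omega⟩, ?_⟩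
      rw [eVec, dif_pos ⟨by omega, by omega⟩]
      congr 1
    · right
      refine ⟨q.val - N + 1, Set.mem_Icc.2 ⟨by omega, by omega⟩, ?_⟩
      have hfin : (⟨N + (q.val - N + 1) - 1, by omega⟩ : Fin (2*N)) = q := by
        apply Fin.ext
        show N + (q.val - N + 1) - 1 = q.val
        omega
      rw [fVec, dif_pos ⟨(by omega : 1 ≤ q.val - N + 1), (by omega : q.val - N + 1 ≤ N)⟩, hfin]

/-- The shift-by-one bijection of `Fin M`. -/
def shiftE (M : ℕ) (hM : 0 < M) : Fin M ≃ Fin M where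
  toFun p := ⟨(p.val + (M-1)) % M, Nat.mod_lt _ hM⟩
  invFun p := ⟨(p.val + 1) % M, Nat.mod_lt _ hM⟩
  left_inv p := by
    apply Fin.ext
    show ((p.val + (M-1)) % M + 1) % M = p.val
    rw [Nat.mod_add_mod]
    have h1 : p.val + (M-1) + 1 = p.val + M := by omega
    rw [h1, Nat.add_mod_right, Nat.mod_eq_of_lt p.isLt]
  right_inv p := by
    apply Fin.ext
    show ((p.val + 1) % M + (M-1)) % M = p.val
    rw [Nat.mod_add_mod]
    have h1 : p.val + 1 + (M-1) = p.val + M := by omega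
    rw [h1, Nat.add_mod_right, Nat.mod_eq_of_lt p.isLt]

lemma shiftE_val (M : ℕ) (hM : 0 < M) (p : Fin M) :
    (shiftE M hM p).val = if p.val = 0 then M - 1 else p.val - 1 := by
  show (p.val + (M-1)) % M = _
  split_ifs with h
  · rw [h, zero_add, Nat.mod_eq_of_lt (by omega)]
  · have h1 : p.val + (M-1) = (p.val - 1) + M := by omega
    rw [h1, Nat.add_mod_right, Nat.mod_eq_of_lt (by omega)]

set_option maxHeartbeats 2000000 in
/-- The key termwise identity relating `β_D^{2m-k,k}` and `β_D^{2(m-2)-(k-2),k-2}`. -/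
lemma key_term (m N k : ℕ) (hm : 3 ≤ m) (hN : m < N) (hk1 : 3 ≤ k) (hk2 : k ≤ m)
    (h2N : 0 < 2*N)
    (u u' : Vsp N)
    (hu : ∀ r : Fin (2*N), ((r.val < N ∧ 2*m-k-1 ≤ r.val) ∨ (N+k-1 ≤ r.val)) → u r = 0)
    (hu' : ∀ r : Fin (2*N), ((r.val < N ∧ 2*m-k-1 ≤ r.val) ∨ (N+k-1 ≤ r.val)) → u' r = 0)
    (p q : Fin (2*N)) :
    u p * (cD N m k p q * u' q)
      = -((zMap N u) (shiftE (2*N) h2N p) *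
          (cD N (m-2) (k-2) (shiftE (2*N) h2N p) (shiftE (2*N) h2N q) *
            (zMap N u') (shiftE (2*N) h2N q))) := by
  set a := shiftE (2*N) h2N p with hadef
  set b := shiftE (2*N) h2N q with hbdef
  have hav : a.val = if p.val = 0 then 2*N - 1 else p.val - 1 := shiftE_val (2*N) h2N p
  have hbv : b.val = if q.val = 0 then 2*N - 1 else q.val - 1 := shiftE_val (2*N) h2N q
  by_cases hA : p.val = 0 ∨ p.val = N
  · -- RHS vanishes since `zMap u` is zero at `a`.
    have hza : zMap N u a = 0 := by
      rw [zMap_apply', dif_neg]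
      rcases hA with h | h
      · rw [if_pos h] at hav
        intro hc
        omega
      · rw [if_neg (by omega)] at hav
        intro hc
        rw [h] at hav
        omega
    rw [hza, zero_mul, neg_zero]
    simp only [cD]
    split_ifs <;>
      first
        | (rw [zero_mul, mul_zero])
        | (rw [hu p (by omega), zero_mul])
        | (rw [hu' q (by omega), mul_zero, mul_zero])
  · by_cases hB : q.val = 0 ∨ q.val = N
    · have hzb : zMap N u' b = 0 := by
        rw [zMap_apply', dif_neg]
        rcases hB with h | h
        · rw [if_pos h] at hbv
          intro hc
          omega
        · rw [if_neg (by omega)] at hbv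
          intro hc
          rw [h] at hbv
          omega
      rw [hzb, mul_zero, mul_zero, neg_zero]
      simp only [cD]
      split_ifs <;>
        first
          | (rw [zero_mul, mul_zero])
          | (rw [hu p (by omega), zero_mul])
          | (rw [hu' q (by omega), mul_zero, mul_zero])
    · -- generic case
      push_neg at hA hB
      rw [if_neg hA.1] at hav
      rw [if_neg hB.1] at hbv
      have hza : zMap N u a = u p := by
        rw [zMap_apply', dif_pos ⟨by omega, by omega⟩]
        refine congrArg (WithLp.ofLp u) ?_
        apply Fin.ext
        show a.val + 1 = p.val
        omega
      have hzb : zMap N u' b = u' q := by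
        rw [zMap_apply', dif_pos ⟨by omega, by omega⟩]
        refine congrArg (WithLp.ofLp u') ?_
        apply Fin.ext
        show b.val + 1 = q.val
        omega
      rw [hza, hzb]
      have hpow : ∀ s t : ℕ, s = t + 1 → ((-1:ℂ))^s = -(-1:ℂ)^t := by
        intro s t h
        rw [h, pow_succ]
        ring
      have hc : cD N m k p q = -cD N (m-2) (k-2) a b := by
        by_cases hkm : k = m
        · simp only [cD, if_pos hkm, if_pos (show k - 2 = m - 2 by omega)]
          split_ifs <;>
            first
              | ring1
              | (exact hpow _ _ (by omega))
              | (exfalso; omega)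
        · simp only [cD, if_neg hkm, if_neg (show ¬(k - 2 = m - 2) by omega)]
          split_ifs <;>
            first
              | ring1
              | (exact hpow _ _ (by omega))
              | (exfalso; omega)
      rw [hc]
      ring

/-- If `zU ⊆ E_{n-k-2,k-2}` is isotropic with respect to
`β_D^{n-k-2,k-2}`, then `U ⊆ E_{n-k,k}` is isotropic with respect to `β_D^{n-k,k}`. -/
theorem statement11 (m N k : ℕ) (hm : 3 ≤ m) (hN : m < N)
    (hk1 : 3 ≤ k) (hk2 : k ≤ m) (hkadm : k = m ∨ Odd k)
    (U : Submodule ℂ (Vsp N))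
    (h1 : Submodule.map (zMap N) U ≤ Esub N (2*m-k-2) (k-2))
    (h2 : IsIsotropic (betaD N (m-2) (k-2)) (Submodule.map (zMap N) U)) :
    U ≤ Esub N (2*m-k) k ∧ IsIsotropic (betaD N m k) U := by
  have h2N : 0 < 2*N := by omega
  have hsupp : ∀ u ∈ U, ∀ r : Fin (2*N),
      ((r.val < N ∧ 2*m-k-1 ≤ r.val) ∨ (N+k-1 ≤ r.val)) → u r = 0 := by
    intro u hu r hr
    have hz : zMap N u ∈ Ecoord N (2*m-k-2) (k-2) :=
      esub_le_ecoord _ _ _ (h1 (Submodule.mem_map_of_mem hu))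
    have hzs : zMap N u (⟨r.val - 1, by omega⟩ : Fin (2*N)) = u r := by
      rw [zMap_apply', dif_pos ⟨(show r.val - 1 + 1 < 2*N by omega),
        (show r.val - 1 + 1 ≠ N by omega)⟩]
      refine congrArg (WithLp.ofLp u) ?_
      apply Fin.ext
      show r.val - 1 + 1 = r.val
      omega
    rw [← hzs]
    exact hz ⟨r.val - 1, by omega⟩ (by
      show (r.val - 1 < N ∧ 2*m-k-2 ≤ r.val - 1) ∨ (N + (k-2) ≤ r.val - 1)
      omega)
  constructor
  · intro u hu
    apply ecoord_le_esub N (2*m-k) k (by omega)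
    rw [mem_Ecoord]
    intro r hr
    exact hsupp u hu r (by omega)
  · intro v hv w hw
    have hz0 : betaD N (m-2) (k-2) (zMap N v) (zMap N w) = 0 :=
      h2 _ (Submodule.mem_map_of_mem hv) _ (Submodule.mem_map_of_mem hw)
    set eE := shiftE (2*N) h2N with heE
    set F : Fin (2*N) → Fin (2*N) → ℂ :=
      fun p q => (zMap N v) p * (cD N (m-2) (k-2) p q * (zMap N w) q) with hF
    have step1 : (∑ p : Fin (2*N), ∑ q : Fin (2*N), v p * (cD N m k p q * w q))
        = ∑ p : Fin (2*N), ∑ q : Fin (2*N), -(F (eE p) (eE q)) := by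
      apply Finset.sum_congr rfl
      intro p _
      apply Finset.sum_congr rfl
      intro q _
      exact key_term m N k hm hN hk1 hk2 h2N v w (hsupp v hv) (hsupp w hw) p q
    have step2 : (∑ p : Fin (2*N), ∑ q : Fin (2*N), -(F (eE p) (eE q)))
        = -(∑ p : Fin (2*N), ∑ q : Fin (2*N), F p q) := by
      have e1 : (∑ p : Fin (2*N), ∑ q : Fin (2*N), F (eE p) (eE q))
          = ∑ p : Fin (2*N), ∑ q : Fin (2*N), F p q := by
        calc (∑ p : Fin (2*N), ∑ q : Fin (2*N), F (eE p) (eE q))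
            = ∑ p : Fin (2*N), ∑ q : Fin (2*N), F (eE p) q :=
              Finset.sum_congr rfl (fun p _ => Equiv.sum_comp eE (F (eE p)))
          _ = ∑ p : Fin (2*N), ∑ q : Fin (2*N), F p q :=
              Equiv.sum_comp eE (fun x => ∑ q : Fin (2*N), F x q)
      rw [← e1]
      simp only [Finset.sum_neg_distrib]
    calc betaD N m k v w
        = ∑ p : Fin (2*N), ∑ q : Fin (2*N), v p * (cD N m k p q * w q) := rfl
      _ = -(∑ p : Fin (2*N), ∑ q : Fin (2*N), F p q) := by rw [step1, step2]
      _ = -(betaD N (m-2) (k-2) (zMap N v) (zMap N w)) := rfl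
      _ = 0 := by rw [hz0, neg_zero]

end Spr
end
end

section
/- Let k = m, so n = 2k. For every cup diagram a ∈ B^{k,k}: every cup of a connects an odd vertex with an even vertex, and if a has a ray then k is odd and the ray is attached to an odd vertex. Consequently, the involution I_k : (S²)^k → (S²)^k, (x_1,…,x_k) ↦ (-x_1, x_2, -x_3, …, (-1)^k x_k), maps S_a bijectively onto the set S'_a of all (x_1,…,x_k) ∈ (S²)^k satisfying x_i = x_j for every undotted cup {i,j} of a, x_i = -x_j for every dotted cup {i,j}, x_i = -p if i carries a dotted ray, and x_i = p if i carries an undotted ray. In particular I_k(S^{k,k}_D) = ⋃_{a ∈ B^{k,k}} S'_a. -/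
noncomputable section
namespace Spr

/-- The involution `I_k(x_1,…,x_k) = (-x_1, x_2, -x_3, …, (-1)^k x_k)`. -/
def Ik (m : ℕ) (x : Fin m → Sph) : Fin m → Sph :=
  fun i => if Odd (i.val + 1) then -(x i) else x i

/-- The set `S'_a` of Ehrig–Stroppel (their sign convention). -/
def Sa' (m : ℕ) (a : CupDiagram m) : Set (Fin m → Sph) :=
  {x | (∀ i j : Fin m, (i.val+1, j.val+1) ∈ a.cups →
          ((i.val+1, j.val+1) ∉ a.dottedCups → (x i : E3) = (x j : E3)) ∧
          ((i.val+1, j.val+1) ∈ a.dottedCups → (x i : E3) = -(x j : E3))) ∧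
       (∀ i : Fin m, a.HasRay (i.val+1) →
          (i.val+1 ∈ a.dottedRays → (x i : E3) = -pPt) ∧
          (i.val+1 ∉ a.dottedRays → (x i : E3) = pPt))}

/-! ### Auxiliary lemmas for Statement 19 -/

lemma pair_card_biUnion {m : ℕ} (a : CupDiagram m) (s : Finset (ℕ × ℕ)) (hs : s ⊆ a.cups) :
    (s.biUnion (fun q => ({q.1, q.2} : Finset ℕ))).card = 2 * s.card := by
  rw [Finset.card_biUnion]
  · rw [Finset.sum_congr rfl (fun q hq => ?_), Finset.sum_const, smul_eq_mul, mul_comm]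
    have hv := a.cups_valid q (hs hq)
    rw [Finset.card_insert_of_notMem (by simp only [Finset.mem_singleton]; omega),
      Finset.card_singleton]
  · intro q hq q' hq' hne
    have hd := a.cups_disjoint q (hs hq) q' (hs hq') hne
    simp only [Finset.disjoint_left, Finset.mem_insert, Finset.mem_singleton]
    rintro l (rfl | rfl) <;> rintro (h | h) <;> tauto

lemma cup_parity {m : ℕ} (a : CupDiagram m) {p : ℕ × ℕ} (hp : p ∈ a.cups) :
    Odd (p.1 + p.2) := by
  have hv := a.cups_valid p hp
  have hset : Finset.Ioo p.1 p.2 =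
      (a.cups.filter (fun q => p.1 < q.1 ∧ q.2 < p.2)).biUnion
        (fun q => ({q.1, q.2} : Finset ℕ)) := by
    ext l
    simp only [Finset.mem_Ioo, Finset.mem_biUnion, Finset.mem_filter, Finset.mem_insert,
      Finset.mem_singleton]
    constructor
    · rintro ⟨h1, h2⟩
      obtain ⟨q, hq, hl, hq1, hq2⟩ := a.noncrossing p hp l h1 h2
      exact ⟨q, ⟨hq, hq1, hq2⟩, hl⟩
    · rintro ⟨q, ⟨hq, hq1, hq2⟩, hl⟩
      have hv' := a.cups_valid q hq
      rcases hl with rfl | rfl <;> omega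
  have hcard := congrArg Finset.card hset
  rw [Nat.card_Ioo, pair_card_biUnion a _ (Finset.filter_subset _ _)] at hcard
  rw [Nat.odd_iff]
  omega

lemma ray_facts {m : ℕ} (hm : 1 ≤ m) (a : CupDiagram m) (ha : a.cups.card = m / 2)
    {r : ℕ} (hr : a.HasRay r) : Odd m ∧ Odd r ∧ ∀ r', a.HasRay r' → r' = r := by
  obtain ⟨hr1, hrm, hrc⟩ := hr
  set E := a.cups.biUnion (fun q => ({q.1, q.2} : Finset ℕ)) with hE
  have hcard : E.card = 2 * (m / 2) := by
    rw [hE, pair_card_biUnion a a.cups (subset_refl _), ha]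
  have hsub : E ⊆ (Finset.Icc 1 m).erase r := by
    intro l hl
    rw [hE, Finset.mem_biUnion] at hl
    obtain ⟨q, hq, hl⟩ := hl
    simp only [Finset.mem_insert, Finset.mem_singleton] at hl
    have hv := a.cups_valid q hq
    have hne := hrc q hq
    simp only [Finset.mem_erase, Finset.mem_Icc]
    rcases hl with rfl | rfl <;> exact ⟨by omega, by omega⟩
  have hcard2 : ((Finset.Icc 1 m).erase r).card = m - 1 := by
    rw [Finset.card_erase_of_mem (by simp only [Finset.mem_Icc]; omega), Nat.card_Icc]
    omega
  have hle := Finset.card_le_card hsub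
  rw [hcard, hcard2] at hle
  have hmodd : Odd m := by rw [Nat.odd_iff]; omega
  have hEeq : E = (Finset.Icc 1 m).erase r :=
    Finset.eq_of_subset_of_card_le hsub (by omega)
  refine ⟨hmodd, ?_, ?_⟩
  · -- r is odd
    have hset : Finset.Icc 1 (r - 1)
        = (a.cups.filter (fun q => q.2 < r)).biUnion (fun q => ({q.1, q.2} : Finset ℕ)) := by
      ext l
      simp only [Finset.mem_Icc, Finset.mem_biUnion, Finset.mem_filter, Finset.mem_insert,
        Finset.mem_singleton]
      constructor
      · rintro ⟨h1, h2⟩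
        have hlE : l ∈ E := by
          rw [hEeq]
          simp only [Finset.mem_erase, Finset.mem_Icc]
          omega
        rw [hE, Finset.mem_biUnion] at hlE
        obtain ⟨q, hq, hl⟩ := hlE
        simp only [Finset.mem_insert, Finset.mem_singleton] at hl
        have hv := a.cups_valid q hq
        have hne := hrc q hq
        refine ⟨q, ⟨hq, ?_⟩, hl⟩
        by_contra hge
        push_neg at hge
        rcases hl with rfl | rfl
        · have hq2r : r < q.2 := by omega
          obtain ⟨q', hq', hl', _, _⟩ := a.noncrossing q hq r (by omega) hq2r
          have hne' := hrc q' hq'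
          omega
        · omega
      · rintro ⟨q, ⟨hq, hq2⟩, hl⟩
        have hv := a.cups_valid q hq
        rcases hl with rfl | rfl <;> omega
    have hcard3 := congrArg Finset.card hset
    rw [Nat.card_Icc, pair_card_biUnion a _ (Finset.filter_subset _ _)] at hcard3
    rw [Nat.odd_iff]
    omega
  · intro r' hr'
    obtain ⟨h1, h2, h3⟩ := hr'
    by_contra hne
    have : r' ∈ E := by
      rw [hEeq]
      simp only [Finset.mem_erase, Finset.mem_Icc]
      exact ⟨hne, by omega, by omega⟩
    rw [hE, Finset.mem_biUnion] at this
    obtain ⟨q, hq, hl⟩ := this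
    simp only [Finset.mem_insert, Finset.mem_singleton] at hl
    have := h3 q hq
    tauto

lemma Ik_coe {m : ℕ} (x : Fin m → Sph) (i : Fin m) :
    ((Ik m x i : Sph) : E3) = if Odd (i.val + 1) then -((x i : Sph) : E3) else ((x i : Sph) : E3) := by
  simp only [Ik]
  split <;> simp

lemma Ik_invol (m : ℕ) (x : Fin m → Sph) : Ik m (Ik m x) = x := by
  funext i
  simp only [Ik]
  split <;> simp

lemma Ik_mapsTo {m : ℕ} (hm : 1 ≤ m) (a : CupDiagram m) (ha : a.cups.card = m / 2) :
    Set.MapsTo (Ik m) (Sa m a) (Sa' m a) := by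
  rintro x ⟨hcup, hray⟩
  constructor
  · intro i j hij
    have hpar := cup_parity a hij
    rw [Nat.odd_iff] at hpar
    obtain ⟨hud, hd⟩ := hcup i j hij
    have hio : Odd (i.val + 1) ↔ ¬ Odd (j.val + 1) := by
      simp only [Nat.odd_iff]
      omega
    constructor
    · intro hnd
      have hx := hud hnd
      rw [Ik_coe, Ik_coe]
      by_cases hi : Odd (i.val + 1)
      · rw [if_pos hi, if_neg (hio.mp hi), hx, neg_neg]
      · rw [if_neg hi, if_pos (by tauto), hx]
    · intro hdd
      have hx := hd hdd
      rw [Ik_coe, Ik_coe]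
      by_cases hi : Odd (i.val + 1)
      · rw [if_pos hi, if_neg (hio.mp hi), hx]
      · rw [if_neg hi, if_pos (by tauto), hx, neg_neg]
  · intro i hri
    obtain ⟨hmodd, hrodd, huniq⟩ := ray_facts hm a ha hri
    obtain ⟨hdr, hudr⟩ := hray i hri
    constructor
    · intro hd
      rw [Ik_coe, if_pos hrodd, hdr hd]
    · intro hnd
      have hx : ((x i : Sph) : E3) = -pPt :=
        (hudr hnd).1 (fun r hr => by rw [huniq r hr])
      rw [Ik_coe, if_pos hrodd, hx, neg_neg]

lemma Ik_mapsTo' {m : ℕ} (hm : 1 ≤ m) (a : CupDiagram m) (ha : a.cups.card = m / 2) :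
    Set.MapsTo (Ik m) (Sa' m a) (Sa m a) := by
  rintro y ⟨hcup, hray⟩
  constructor
  · intro i j hij
    have hpar := cup_parity a hij
    rw [Nat.odd_iff] at hpar
    obtain ⟨hud, hd⟩ := hcup i j hij
    have hio : Odd (i.val + 1) ↔ ¬ Odd (j.val + 1) := by
      simp only [Nat.odd_iff]
      omega
    constructor
    · intro hnd
      have hy := hud hnd
      rw [Ik_coe, Ik_coe]
      by_cases hi : Odd (i.val + 1)
      · rw [if_pos hi, if_neg (hio.mp hi), hy]
      · rw [if_neg hi, if_pos (by tauto), hy, neg_neg]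
    · intro hdd
      have hy := hd hdd
      rw [Ik_coe, Ik_coe]
      by_cases hi : Odd (i.val + 1)
      · rw [if_pos hi, if_neg (hio.mp hi), hy, neg_neg]
      · rw [if_neg hi, if_pos (by tauto), hy]
  · intro i hri
    obtain ⟨hmodd, hrodd, huniq⟩ := ray_facts hm a ha hri
    obtain ⟨hdr, hudr⟩ := hray i hri
    constructor
    · intro hd
      rw [Ik_coe, if_pos hrodd, hdr hd, neg_neg]
    · intro hnd
      refine ⟨fun _ => by rw [Ik_coe, if_pos hrodd, hudr hnd], ?_⟩
      rintro ⟨r, hr, hlt⟩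
      have := huniq r hr
      omega

lemma Ik_bijOn {m : ℕ} (hm : 1 ≤ m) (a : CupDiagram m) (ha : a.cups.card = m / 2) :
    Set.BijOn (Ik m) (Sa m a) (Sa' m a) :=
  Set.InvOn.bijOn ⟨fun x _ => Ik_invol m x, fun x _ => Ik_invol m x⟩
    (Ik_mapsTo hm a ha) (Ik_mapsTo' hm a ha)

/-- For `k = m` every cup of a cup diagram `a ∈ B^{k,k}` connects an odd
and an even vertex, a ray (if any) sits at an odd vertex and forces `k` odd, and the
involution `I_k` maps `S_a` bijectively onto `S'_a`; in particular
`I_k(S^{k,k}_D) = ⋃_a S'_a`. -/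
theorem statement19 (m : ℕ) (hm : 1 ≤ m) (a : CupDiagram m) (ha : a.cups.card = m / 2) :
    (∀ p ∈ a.cups, (Odd p.1 ∧ Even p.2) ∨ (Even p.1 ∧ Odd p.2)) ∧
    (∀ r, a.HasRay r → Odd m ∧ Odd r) ∧
    Set.BijOn (Ik m) (Sa m a) (Sa' m a) ∧
    Ik m '' (⋃ a' ∈ {a' : CupDiagram m | a'.cups.card = m / 2}, Sa m a')
      = ⋃ a' ∈ {a' : CupDiagram m | a'.cups.card = m / 2}, Sa' m a' := by
  refine ⟨?_, ?_, Ik_bijOn hm a ha, ?_⟩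
  · intro p hp
    have h := cup_parity a hp
    rw [Nat.odd_iff] at h
    rcases Nat.even_or_odd p.1 with h1 | h1
    · exact Or.inr ⟨h1, by rw [Nat.odd_iff]; rw [Nat.even_iff] at h1; omega⟩
    · exact Or.inl ⟨h1, by rw [Nat.even_iff]; rw [Nat.odd_iff] at h1; omega⟩
  · intro r hr
    obtain ⟨h1, h2, _⟩ := ray_facts hm a ha hr
    exact ⟨h1, h2⟩
  · rw [Set.image_iUnion₂]
    exact Set.iUnion₂_congr fun a' ha' => (Ik_bijOn hm a' ha').image_eq

end Spr
end
end
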